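/- arXiv:2412.15472 — 5 statements merged into one kernel-verified Lean document; each statement's English description precedes it below -/
import Mathlib

section
/- Let n ≥ 2 and let f : ℝ≥0 → ℝ ∪ {−∞} be a strictly increasing function. Then the following are equivalent: (a) for every positive-admitting binary instance with n agents, every allocation chosen by the additive welfarist rule with f is EF1; (b) f satisfies Condition 4. -/
open scoped BigOperators

noncomputable section

namespace FairDiv

/-- The bundle of goods received by agent `i` under the assignment `A` of goods to agents. -/
def bundle {n m : ℕ} (A : Fin m → Fin n) (i : Fin n) : Finset (Fin m) :=
  Finset.univ.filter fun g => A g = i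

/-- Additive utility of agent `i` for a set `S` of goods. -/
def util {n m : ℕ} (u : Fin n → Fin m → ℝ) (i : Fin n) (S : Finset (Fin m)) : ℝ :=
  ∑ g ∈ S, u i g

/-- Envy-freeness up to one good. -/
def EF1 {n m : ℕ} (u : Fin n → Fin m → ℝ) (A : Fin m → Fin n) : Prop :=
  ∀ i j : Fin n, bundle A j ≠ ∅ →
    ∃ g ∈ bundle A j, util u i ((bundle A j).erase g) ≤ util u i (bundle A i)

/-- Welfare of an allocation under the additive welfarist rule with function `f`. -/
def welfare {n m : ℕ} (f : ℝ → EReal) (u : Fin n → Fin m → ℝ) (A : Fin m → Fin n) : EReal :=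
  ∑ i : Fin n, f (util u i (bundle A i))

/-- An allocation is chosen by the additive welfarist rule with `f` if it maximizes welfare. -/
def Chosen {n m : ℕ} (f : ℝ → EReal) (u : Fin n → Fin m → ℝ) (A : Fin m → Fin n) : Prop :=
  ∀ B : Fin m → Fin n, welfare f u B ≤ welfare f u A

/-- An instance is positive-admitting if some allocation gives everyone positive utility. -/
def PositiveAdmitting {n m : ℕ} (u : Fin n → Fin m → ℝ) : Prop :=
  ∃ B : Fin m → Fin n, ∀ i : Fin n, 0 < util u i (bundle B i)

def IdenticalGood {n m : ℕ} (u : Fin n → Fin m → ℝ) : Prop :=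
  ∀ i : Fin n, ∃ a : ℝ, 0 < a ∧ ∀ g : Fin m, u i g = a

def TwoValue {n m : ℕ} (u : Fin n → Fin m → ℝ) : Prop :=
  ∃ a₁ a₂ : ℝ, a₁ ≠ a₂ ∧ 0 ≤ a₁ ∧ 0 ≤ a₂ ∧ ∀ i g, u i g = a₁ ∨ u i g = a₂

def Normalized {n m : ℕ} (u : Fin n → Fin m → ℝ) : Prop :=
  ∀ i j : Fin n, util u i Finset.univ = util u j Finset.univ

def IntegerValued {n m : ℕ} (u : Fin n → Fin m → ℝ) : Prop :=
  ∀ i g, ∃ z : ℕ, u i g = (z : ℝ)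

def Binary {n m : ℕ} (u : Fin n → Fin m → ℝ) : Prop :=
  ∀ i g, u i g = 0 ∨ u i g = 1

/-- `Δ_{f,k}(x) = f((k+1)x) − f(kx)`, valued in `EReal` (it is `+∞` iff `f(kx) = −∞`). -/
def Delta (f : ℝ → EReal) (k : ℕ) (x : ℝ) : EReal :=
  f (((k : ℝ) + 1) * x) - f ((k : ℝ) * x)

/-- Condition 1: `Δ_{f,k}(b) > Δ_{f,k+1}(a)` for all `k ∈ ℤ≥0` and `a, b ∈ ℝ>0`. -/
def Cond1 (f : ℝ → EReal) : Prop :=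
  ∀ k : ℕ, ∀ a b : ℝ, 0 < a → 0 < b → Delta f (k + 1) a < Delta f k b

/-- Condition 1a: `Δ_{f,k}` is constant on `ℝ>0` for every `k ∈ ℤ>0`. -/
def Cond1a (f : ℝ → EReal) : Prop :=
  ∀ k : ℕ, 0 < k → ∀ x y : ℝ, 0 < x → 0 < y → Delta f k x = Delta f k y

/-- Condition 2. -/
def Cond2 (f : ℝ → EReal) : Prop :=
  ∀ a b c d : ℝ, 0 ≤ a → 0 ≤ b → 0 ≤ c → 0 ≤ d →
    min a b ≤ min c d → a * b < c * d → f a + f b < f c + f d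

/-- Condition 3: `Δ_{f,k}(b) > Δ_{f,k+1}(a)` for all `k ∈ ℤ≥0` and `a, b ∈ ℤ>0`. -/
def Cond3 (f : ℝ → EReal) : Prop :=
  ∀ k : ℕ, ∀ a b : ℕ, 0 < a → 0 < b → Delta f (k + 1) (a : ℝ) < Delta f k (b : ℝ)

/-- Condition 3a. -/
def Cond3a (f : ℝ → EReal) : Prop :=
  ∀ k l : ℕ, l < k → ∀ a b : ℕ, 0 < a → 0 < b → Delta f k (a : ℝ) < Delta f l (b : ℝ)

/-- Condition 3b: `Δ_{f,k}(1) > Δ_{f,k+1}(a) > Δ_{f,k+2}(1)` for `k ∈ ℤ≥0`, `a ∈ ℤ>0`. -/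
def Cond3b (f : ℝ → EReal) : Prop :=
  ∀ k : ℕ, ∀ a : ℕ, 0 < a →
    Delta f (k + 1) (a : ℝ) < Delta f k 1 ∧ Delta f (k + 2) 1 < Delta f (k + 1) (a : ℝ)

/-- Condition 4: `Δ_{f,k}(1) > Δ_{f,k+1}(1)` for all `k ∈ ℤ≥0`. -/
def Cond4 (f : ℝ → EReal) : Prop :=
  ∀ k : ℕ, Delta f (k + 1) 1 < Delta f k 1

/-- Condition 5. -/
def Cond5 (f : ℝ → EReal) : Prop :=
  ∀ a b k l r : ℕ, 0 < a → 0 < b → b ≤ a → l * b + r * a < (k + 1) * b →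
    Delta f (k + 1) (a : ℝ) <
        f (((l : ℝ) + 1) * (b : ℝ) + (r : ℝ) * (a : ℝ)) - f ((l : ℝ) * (b : ℝ) + (r : ℝ) * (a : ℝ))
      ∧ Delta f (k + 2) 1 < Delta f (k + 1) (a : ℝ)

/-- Condition 6a: `f((k+1)b−1) − f(kb−1) > Δ_{f,k}(a)` for all `k, a, b ∈ ℤ>0`. -/
def Cond6a (f : ℝ → EReal) : Prop :=
  ∀ k a b : ℕ, 0 < k → 0 < a → 0 < b →
    Delta f k (a : ℝ) < f (((k : ℝ) + 1) * (b : ℝ) - 1) - f ((k : ℝ) * (b : ℝ) - 1)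

/-- Condition 6b: `f(y+b) − f(y) > f(x+a) − f(x)` whenever `x/a ≥ (y+1)/b`. -/
def Cond6b (f : ℝ → EReal) : Prop :=
  ∀ a b : ℕ, ∀ x y : ℕ, 0 < a → 0 < b → ((y : ℝ) + 1) / (b : ℝ) ≤ (x : ℝ) / (a : ℝ) →
    f ((x : ℝ) + (a : ℝ)) - f (x : ℝ) < f ((y : ℝ) + (b : ℝ)) - f (y : ℝ)

/-- Modified logarithmic function `λ_c(x) = log (x + c)`, with `log 0 = −∞`. -/
def lam (c : ℝ) (x : ℝ) : EReal :=
  if x + c = 0 then ⊥ else ((Real.log (x + c) : ℝ) : EReal)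

/-- The `p`-mean function `φ_p`, with `φ_p(0) = −∞` for `p ≤ 0`. -/
def phi (p : ℝ) (x : ℝ) : EReal :=
  if 0 < p then ((x ^ p : ℝ) : EReal)
  else if x = 0 then ⊥
  else if p = 0 then ((Real.log x : ℝ) : EReal)
  else ((-(x ^ p) : ℝ) : EReal)

/-- Modified harmonic number `h_c` on nonnegative integers. -/
def hmod (c : ℝ) (x : ℕ) : EReal :=
  if c = -1 then
    (if x = 0 then (⊥ : EReal)
     else (((∑ t ∈ Finset.range (x - 1), (1 : ℝ) / ((t : ℝ) + 1)) : ℝ) : EReal))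
  else (((∑ t ∈ Finset.range x, (1 : ℝ) / ((t : ℝ) + 1 + c)) : ℝ) : EReal)

/-- Condition 3b for a function defined on nonnegative integers. -/
def Cond3bNat (f : ℕ → EReal) : Prop :=
  ∀ k : ℕ, ∀ a : ℕ, 0 < a →
    f ((k + 2) * a) - f ((k + 1) * a) < f (k + 1) - f k
    ∧ f (k + 3) - f (k + 2) < f ((k + 2) * a) - f ((k + 1) * a)

lemma util_nonneg {n m : ℕ} (u : Fin n → Fin m → ℝ) (h : ∀ i g, 0 ≤ u i g) (i : Fin n)
    (S : Finset (Fin m)) : 0 ≤ util u i S :=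
  Finset.sum_nonneg fun g _ => h i g

lemma util_nat {n m : ℕ} {u : Fin n → Fin m → ℝ} (hb : Binary u) (i : Fin n)
    (S : Finset (Fin m)) : ∃ c : ℕ, util u i S = (c : ℝ) := by
  classical
  induction S using Finset.induction_on with
  | empty => exact ⟨0, by simp [util]⟩
  | @insert a s ha ih =>
    obtain ⟨c, hc⟩ := ih
    rcases hb i a with h | h
    · exact ⟨c, by rw [util, Finset.sum_insert ha, h, zero_add]; exact hc⟩
    · refine ⟨c + 1, ?_⟩
      rw [util, Finset.sum_insert ha, h]
      rw [util] at hc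
      rw [hc]; push_cast; ring

lemma sum_indic (M p q : ℕ) (hq : q ≤ M) :
    (∑ t ∈ Finset.range M, (if p ≤ t ∧ t < q then (1:ℝ) else 0)) = ((q - p : ℕ) : ℝ) := by
  have hsub : Finset.Ico p q ⊆ Finset.range M := by
    intro t ht
    rw [Finset.mem_Ico] at ht
    exact Finset.mem_range.mpr (lt_of_lt_of_le ht.2 hq)
  calc (∑ t ∈ Finset.range M, (if p ≤ t ∧ t < q then (1:ℝ) else 0))
      = ∑ t ∈ Finset.range M, (if t ∈ Finset.Ico p q then (1:ℝ) else 0) := by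
        refine Finset.sum_congr rfl fun t _ => by simp [Finset.mem_Ico]
    _ = ∑ t ∈ Finset.range M ∩ Finset.Ico p q, (1:ℝ) := Finset.sum_ite_mem _ _ _
    _ = ((q - p : ℕ) : ℝ) := by
        rw [Finset.inter_eq_right.mpr hsub, Finset.sum_const, Nat.card_Ico]
        simp

lemma util_bundle_eq {n m : ℕ} (u : Fin n → Fin m → ℝ) (A : Fin m → Fin n) (i : Fin n) :
    util u i (bundle A i) = ∑ g : Fin m, (if A g = i then u i g else 0) := by
  rw [util, bundle, Finset.sum_filter]

def move {n m : ℕ} (A : Fin m → Fin n) (g : Fin m) (i : Fin n) : Fin m → Fin n :=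
  fun g' => if g' = g then i else A g'

lemma bundle_move_eq {n m : ℕ} (A : Fin m → Fin n) (g : Fin m) (i : Fin n) :
    bundle (move A g i) i = insert g (bundle A i) := by
  ext g'
  simp only [bundle, move, Finset.mem_filter, Finset.mem_univ, true_and, Finset.mem_insert]
  by_cases hg : g' = g <;> simp [hg]

lemma bundle_move_ne {n m : ℕ} (A : Fin m → Fin n) (g : Fin m) (i : Fin n) (l : Fin n)
    (h : l ≠ i) : bundle (move A g i) l = (bundle A l).erase g := by
  ext g'
  simp only [bundle, Finset.mem_filter, Finset.mem_univ, true_and, Finset.mem_erase]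
  by_cases hg : g' = g <;> simp [move, hg, Ne.symm h]

lemma welfare_split {n m : ℕ} (f : ℝ → EReal) (u : Fin n → Fin m → ℝ) (A : Fin m → Fin n)
    (i j : Fin n) (hij : i ≠ j) :
    welfare f u A = f (util u i (bundle A i)) + (f (util u j (bundle A j))
      + ∑ l ∈ (Finset.univ.erase i).erase j, f (util u l (bundle A l))) := by
  rw [welfare, ← Finset.add_sum_erase _ _ (Finset.mem_univ i)]
  congr 1
  rw [← Finset.add_sum_erase _ _ (Finset.mem_erase.mpr ⟨Ne.symm hij, Finset.mem_univ j⟩)]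

lemma welfare_eq_bot {n m : ℕ} (f : ℝ → EReal) (u : Fin n → Fin m → ℝ) (A : Fin m → Fin n)
    (l : Fin n) (h : f (util u l (bundle A l)) = ⊥) : welfare f u A = ⊥ := by
  rw [welfare, ← Finset.add_sum_erase _ _ (Finset.mem_univ l), h, EReal.bot_add]


lemma ereal_coe_sum {A : Type*} (s : Finset A) (r : A → ℝ) :
    ((∑ x ∈ s, r x : ℝ) : EReal) = ∑ x ∈ s, ((r x : ℝ) : EReal) := by
  classical
  induction s using Finset.cons_induction with
  | empty => simp
  | cons a s ha ih => rw [Finset.sum_cons, Finset.sum_cons, EReal.coe_add, ih]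

lemma welfare_move_gt {n m : ℕ} (f : ℝ → EReal) (u : Fin n → Fin m → ℝ) (A : Fin m → Fin n)
    (i j : Fin n) (hij : i ≠ j) (g : Fin m) (hg : g ∈ bundle A j)
    (hfin : ∀ l : Fin n, f (util u l (bundle A l)) ≠ ⊥ ∧ f (util u l (bundle A l)) ≠ ⊤)
    (hlt : f (util u i (bundle A i)) + f (util u j (bundle A j))
       < f (util u i (bundle A i) + u i g) + f (util u j (bundle A j) - u j g)) :
    welfare f u A < welfare f u (move A g i) := by
  classical
  have hAg : A g = j := by
    simpa [bundle] using hg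
  have hginotin : g ∉ bundle A i := by
    simp only [bundle, Finset.mem_filter, Finset.mem_univ, true_and, hAg]
    exact Ne.symm hij
  have hBi : util u i (bundle (move A g i) i) = util u i (bundle A i) + u i g := by
    rw [bundle_move_eq, util, Finset.sum_insert hginotin, ← util, add_comm]
  have hBj : util u j (bundle (move A g i) j) = util u j (bundle A j) - u j g := by
    rw [bundle_move_ne A g i j (Ne.symm hij), util, Finset.sum_erase_eq_sub hg, ← util]
  have hBl : ∀ l ∈ (Finset.univ.erase i).erase j, bundle (move A g i) l = bundle A l := by
    intro l hl
    rw [Finset.mem_erase, Finset.mem_erase] at hl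
    rw [bundle_move_ne A g i l hl.2.1]
    apply Finset.erase_eq_of_notMem
    simp only [bundle, Finset.mem_filter, Finset.mem_univ, true_and, hAg]
    exact Ne.symm hl.1
  have hcoe : ∀ l : Fin n, ∃ r : ℝ, f (util u l (bundle A l)) = (r : EReal) := fun l =>
    ⟨(f (util u l (bundle A l))).toReal, (EReal.coe_toReal (hfin l).2 (hfin l).1).symm⟩
  choose r hr using hcoe
  have hR : (∑ l ∈ (Finset.univ.erase i).erase j, f (util u l (bundle A l)))
      = ((∑ l ∈ (Finset.univ.erase i).erase j, r l : ℝ) : EReal) := by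
    rw [ereal_coe_sum]
    exact Finset.sum_congr rfl fun l _ => hr l
  have hsum : (∑ l ∈ (Finset.univ.erase i).erase j, f (util u l (bundle (move A g i) l)))
      = ∑ l ∈ (Finset.univ.erase i).erase j, f (util u l (bundle A l)) :=
    Finset.sum_congr rfl (fun l hl => by rw [hBl l hl])
  rw [welfare_split f u A i j hij, welfare_split f u (move A g i) i j hij, hBi, hBj,
    hsum, hR, ← add_assoc, ← add_assoc]
  exact EReal.add_lt_add_right_coe hlt _

lemma sum_lt_prefix (M c : ℕ) (h : c ≤ M) :
    ∑ t ∈ Finset.range M, (if t < c then (1:ℝ) else 0) = (c : ℝ) := by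
  have h2 := sum_indic M 0 c h
  simpa using h2

def gu (n k : ℕ) : Fin n → Fin (2*k+n) → ℝ := fun i g =>
  if (g:ℕ) < 2*k+2 then (if (i:ℕ) < 2 then 1 else 0) else (if (g:ℕ) = 2*k+(i:ℕ) then 1 else 0)

def gA (n k : ℕ) (hn : 2 ≤ n) (c : ℕ) : Fin (2*k+n) → Fin n := fun g =>
  if (g:ℕ) < c then ⟨0, by omega⟩ else if (g:ℕ) < 2*k+2 then ⟨1, by omega⟩
  else ⟨(g:ℕ) - 2*k, by have := g.isLt; omega⟩

lemma gu_binary (n k : ℕ) : Binary (gu n k) := fun i g => by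
  unfold gu; split_ifs <;> simp

lemma gu_nonneg (n k : ℕ) : ∀ (i : Fin n) (g : Fin (2*k+n)), 0 ≤ gu n k i g := fun i g => by
  unfold gu; split_ifs <;> norm_num

lemma gu_eq_w (n k : ℕ) (i : Fin n) (hi : (i:ℕ) < 2) (g : Fin (2*k+n)) :
    gu n k i g = if (g:ℕ) < 2*k+2 then 1 else 0 := by
  unfold gu
  rcases lt_or_ge (g:ℕ) (2*k+2) with h | h
  · simp [h, hi]
  · have h1 : ¬ (g:ℕ) < 2*k+2 := not_lt.mpr h
    have h2 : ¬ (g:ℕ) = 2*k+(i:ℕ) := by omega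
    simp [h1, h2]

lemma gA_val (n k : ℕ) (hn : 2 ≤ n) (c : ℕ) (g : Fin (2*k+n)) :
    ((gA n k hn c g) : ℕ)
      = if (g:ℕ) < c then 0 else if (g:ℕ) < 2*k+2 then 1 else (g:ℕ)-2*k := by
  unfold gA; split_ifs <;> rfl

lemma util_lo_eq (n k : ℕ) (i j : Fin n) (hi : (i:ℕ) < 2) (hj : (j:ℕ) < 2)
    (S : Finset (Fin (2*k+n))) : util (gu n k) i S = util (gu n k) j S := by
  unfold util
  exact Finset.sum_congr rfl fun g _ => by rw [gu_eq_w n k i hi g, gu_eq_w n k j hj g]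

lemma gA_util0 (n k : ℕ) (hn : 2 ≤ n) (c : ℕ) (hc : c ≤ 2*k+2) (i : Fin n) (hi : (i:ℕ) = 0) :
    util (gu n k) i (bundle (gA n k hn c) i) = (c : ℝ) := by
  rw [util_bundle_eq]
  have hpt : ∀ g : Fin (2*k+n),
      (if gA n k hn c g = i then gu n k i g else 0) = (if (g:ℕ) < c then (1:ℝ) else 0) := by
    intro g
    have hval := gA_val n k hn c g
    by_cases h1 : (g:ℕ) < c
    · have hA : gA n k hn c g = i := Fin.ext (by rw [hval, hi]; simp [h1])
      rw [if_pos hA, if_pos h1, gu_eq_w n k i (by omega) g,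
        if_pos (show (g:ℕ) < 2*k+2 by omega)]
    · have hA : gA n k hn c g ≠ i := by
        intro hEq
        have h2 := congrArg Fin.val hEq
        rw [hval, hi, if_neg h1] at h2
        by_cases h3 : (g:ℕ) < 2*k+2
        · rw [if_pos h3] at h2; omega
        · rw [if_neg h3] at h2; omega
      rw [if_neg hA, if_neg h1]
  rw [Finset.sum_congr rfl (fun g _ => hpt g),
    Fin.sum_univ_eq_sum_range (fun t => if t < c then (1:ℝ) else 0) (2*k+n),
    sum_lt_prefix _ _ (by omega)]

lemma gA_util1 (n k : ℕ) (hn : 2 ≤ n) (c : ℕ) (hc : c ≤ 2*k+2) (i : Fin n) (hi : (i:ℕ) = 1) :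
    util (gu n k) i (bundle (gA n k hn c) i) = ((2*k+2-c : ℕ) : ℝ) := by
  rw [util_bundle_eq]
  have hpt : ∀ g : Fin (2*k+n),
      (if gA n k hn c g = i then gu n k i g else 0)
        = (if c ≤ (g:ℕ) ∧ (g:ℕ) < 2*k+2 then (1:ℝ) else 0) := by
    intro g
    have hval := gA_val n k hn c g
    by_cases h1 : (g:ℕ) < c
    · have hA : gA n k hn c g ≠ i := by
        intro hEq
        have h2 := congrArg Fin.val hEq
        rw [hval, hi, if_pos h1] at h2; omega
      rw [if_neg hA, if_neg (by omega)]
    · by_cases h2 : (g:ℕ) < 2*k+2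
      · have hA : gA n k hn c g = i := Fin.ext (by rw [hval, hi, if_neg h1, if_pos h2])
        rw [if_pos hA, if_pos (by omega : c ≤ (g:ℕ) ∧ (g:ℕ) < 2*k+2),
          gu_eq_w n k i (by omega) g, if_pos h2]
      · have hA : gA n k hn c g ≠ i := by
          intro hEq
          have h3 := congrArg Fin.val hEq
          rw [hval, hi, if_neg h1, if_neg h2] at h3
          have := g.isLt; omega
        rw [if_neg hA, if_neg (by omega)]
  rw [Finset.sum_congr rfl (fun g _ => hpt g),
    Fin.sum_univ_eq_sum_range (fun t => if c ≤ t ∧ t < 2*k+2 then (1:ℝ) else 0) (2*k+n),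
    sum_indic _ _ _ (by omega)]

lemma gA_util2 (n k : ℕ) (hn : 2 ≤ n) (c : ℕ) (hc : c ≤ 2*k+2) (i : Fin n) (hi : 2 ≤ (i:ℕ)) :
    util (gu n k) i (bundle (gA n k hn c) i) = 1 := by
  rw [util_bundle_eq]
  have hpt : ∀ g : Fin (2*k+n),
      (if gA n k hn c g = i then gu n k i g else 0)
        = (if (g:ℕ) = 2*k+(i:ℕ) then (1:ℝ) else 0) := by
    intro g
    have hval := gA_val n k hn c g
    by_cases h2 : (g:ℕ) < 2*k+2
    · have hA : gA n k hn c g ≠ i := by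
        intro hEq
        have h3 := congrArg Fin.val hEq
        rw [hval] at h3
        by_cases h1 : (g:ℕ) < c
        · rw [if_pos h1] at h3; omega
        · rw [if_neg h1, if_pos h2] at h3; omega
      rw [if_neg hA, if_neg (by omega)]
    · by_cases h4 : (g:ℕ) = 2*k+(i:ℕ)
      · have hA : gA n k hn c g = i :=
          Fin.ext (by rw [hval, if_neg (by omega), if_neg h2]; omega)
        rw [if_pos hA, if_pos h4]
        unfold gu
        rw [if_neg h2, if_pos h4]
      · have hA : gA n k hn c g ≠ i := by
          intro hEq
          have h3 := congrArg Fin.val hEq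
          rw [hval, if_neg (by omega), if_neg h2] at h3
          omega
        rw [if_neg hA, if_neg h4]
  rw [Finset.sum_congr rfl (fun g _ => hpt g),
    Fin.sum_univ_eq_sum_range (fun t => if t = 2*k+(i:ℕ) then (1:ℝ) else 0) (2*k+n),
    Finset.sum_ite_eq' (Finset.range (2*k+n)) (2*k+(i:ℕ)) (fun _ => (1:ℝ)),
    if_pos (Finset.mem_range.mpr (by have := i.isLt; omega))]

lemma gu_util_hi_le (n k : ℕ) (i : Fin n) (hi : 2 ≤ (i:ℕ)) (S : Finset (Fin (2*k+n))) :
    util (gu n k) i S ≤ 1 := by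
  have h1 : util (gu n k) i S ≤ ∑ g : Fin (2*k+n), gu n k i g :=
    Finset.sum_le_sum_of_subset_of_nonneg (Finset.subset_univ S)
      (fun g _ _ => gu_nonneg n k i g)
  have hpt : ∀ g : Fin (2*k+n), gu n k i g = if (g:ℕ) = 2*k+(i:ℕ) then (1:ℝ) else 0 := by
    intro g
    unfold gu
    by_cases hg : (g:ℕ) < 2*k+2
    · rw [if_pos hg, if_neg (by omega : ¬(i:ℕ) < 2), if_neg (by omega)]
    · rw [if_neg hg]
  have h2 : ∑ g : Fin (2*k+n), gu n k i g = 1 := by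
    rw [Finset.sum_congr rfl (fun g _ => hpt g),
      Fin.sum_univ_eq_sum_range (fun t => if t = 2*k+(i:ℕ) then (1:ℝ) else 0) (2*k+n),
      Finset.sum_ite_eq' (Finset.range (2*k+n)) (2*k+(i:ℕ)) (fun _ => (1:ℝ)),
      if_pos (Finset.mem_range.mpr (by have := i.isLt; omega))]
  linarith

lemma gu_sum_lo_le (n k : ℕ) (hn : 2 ≤ n) (S T : Finset (Fin (2*k+n))) (hST : Disjoint S T)
    (i j : Fin n) (hi : (i:ℕ) < 2) (hj : (j:ℕ) < 2) :
    util (gu n k) i S + util (gu n k) j T ≤ ((2*k+2 : ℕ) : ℝ) := by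
  have hw : ∀ (l : Fin n), (l:ℕ) < 2 → ∀ U : Finset (Fin (2*k+n)),
      util (gu n k) l U = ∑ g ∈ U, (if (g:ℕ) < 2*k+2 then (1:ℝ) else 0) := by
    intro l hl U
    exact Finset.sum_congr rfl fun g _ => gu_eq_w n k l hl g
  rw [hw i hi S, hw j hj T, ← Finset.sum_union hST]
  have h1 : (∑ g ∈ S ∪ T, (if (g:ℕ) < 2*k+2 then (1:ℝ) else 0))
      ≤ ∑ g : Fin (2*k+n), (if (g:ℕ) < 2*k+2 then (1:ℝ) else 0) :=
    Finset.sum_le_sum_of_subset_of_nonneg (Finset.subset_univ _)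
      (fun g _ _ => by split_ifs <;> norm_num)
  have h2 : (∑ g : Fin (2*k+n), (if (g:ℕ) < 2*k+2 then (1:ℝ) else 0)) = ((2*k+2 : ℕ) : ℝ) := by
    rw [Fin.sum_univ_eq_sum_range (fun t => if t < 2*k+2 then (1:ℝ) else 0) (2*k+n),
      sum_lt_prefix _ _ (by omega)]
  linarith

lemma gA_mem1 (n k : ℕ) (hn : 2 ≤ n) (c : ℕ) (i : Fin n) (hi : (i:ℕ) = 1)
    (g : Fin (2*k+n)) : g ∈ bundle (gA n k hn c) i ↔ (c ≤ (g:ℕ) ∧ (g:ℕ) < 2*k+2) := by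
  have hval := gA_val n k hn c g
  simp only [bundle, Finset.mem_filter, Finset.mem_univ, true_and, Fin.ext_iff, hval, hi]
  by_cases h1 : (g:ℕ) < c
  · rw [if_pos h1]; constructor <;> intro h <;> omega
  · rw [if_neg h1]
    by_cases h2 : (g:ℕ) < 2*k+2
    · rw [if_pos h2]; constructor <;> intro h <;> omega
    · rw [if_neg h2]
      have := g.isLt
      constructor <;> intro h <;> omega


theorem main_mpr (n : ℕ) (hn : 2 ≤ n) (f : ℝ → EReal)
    (hfmono : StrictMonoOn f (Set.Ici (0 : ℝ)))
    (hftop : ∀ x : ℝ, 0 ≤ x → f x ≠ ⊤)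
    (hfbot : ∀ x : ℝ, 0 < x → f x ≠ ⊥)
    (h4 : Cond4 f) (m : ℕ) (u : Fin n → Fin m → ℝ) (hupos : ∀ i g, 0 ≤ u i g)
    (hbin : Binary u) (hadm : PositiveAdmitting u) (A : Fin m → Fin n)
    (hA : Chosen f u A) : EF1 u A := by
  classical
  have hanti : StrictAnti fun k => Delta f k 1 := strictAnti_nat_of_succ_lt h4
  obtain ⟨B₀, hB₀⟩ := hadm
  have hfinB : ∀ l : Fin n, f (util u l (bundle B₀ l)) ≠ ⊥ ∧ f (util u l (bundle B₀ l)) ≠ ⊤ :=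
    fun l => ⟨hfbot _ (hB₀ l), hftop _ (le_of_lt (hB₀ l))⟩
  have hWB : welfare f u B₀ ≠ ⊥ := by
    have hcoe : ∀ l : Fin n, ∃ r : ℝ, f (util u l (bundle B₀ l)) = (r : EReal) := fun l =>
      ⟨_, (EReal.coe_toReal (hfinB l).2 (hfinB l).1).symm⟩
    choose r hr using hcoe
    have hs : welfare f u B₀ = ((∑ l : Fin n, r l : ℝ) : EReal) := by
      rw [welfare, Finset.sum_congr rfl (fun l _ => hr l), ← ereal_coe_sum]
    rw [hs]
    exact EReal.coe_ne_bot _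
  have hfinA : ∀ l : Fin n, f (util u l (bundle A l)) ≠ ⊥ ∧ f (util u l (bundle A l)) ≠ ⊤ := by
    intro l
    refine ⟨?_, hftop _ (util_nonneg u hupos l _)⟩
    intro hb
    have h1 := welfare_eq_bot f u A l hb
    have h2 := hA B₀
    rw [h1] at h2
    exact hWB (le_bot_iff.mp h2)
  intro i j hjne
  by_contra hcon
  push_neg at hcon
  obtain ⟨g₀, hg₀⟩ := Finset.nonempty_iff_ne_empty.mpr hjne
  have hij : i ≠ j := by
    rintro rfl
    have hle : util u i ((bundle A i).erase g₀) ≤ util u i (bundle A i) :=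
      Finset.sum_le_sum_of_subset_of_nonneg (Finset.erase_subset _ _) fun x _ _ => hupos _ x
    exact absurd (hcon g₀ hg₀) (not_lt.mpr hle)
  obtain ⟨sn, hsn⟩ := util_nat hbin i (bundle A i)
  obtain ⟨tn, htn⟩ := util_nat hbin j (bundle A j)
  have hclaim : ∀ g ∈ bundle A j, u i g = 1 → u j g = 1 := by
    intro g hg hui
    by_contra huj1
    have huj : u j g = 0 := (hbin j g).resolve_right huj1
    have hlt : f (util u i (bundle A i)) + f (util u j (bundle A j))
        < f (util u i (bundle A i) + u i g) + f (util u j (bundle A j) - u j g) := by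
      rw [hui, huj, sub_zero]
      have hnn := util_nonneg u hupos i (bundle A i)
      have h1 : f (util u i (bundle A i)) < f (util u i (bundle A i) + 1) :=
        hfmono (Set.mem_Ici.mpr hnn) (Set.mem_Ici.mpr (by linarith)) (by linarith)
      have hrt : f (util u j (bundle A j))
          = (((f (util u j (bundle A j))).toReal : ℝ) : EReal) :=
        (EReal.coe_toReal (hfinA j).2 (hfinA j).1).symm
      rw [hrt]
      exact EReal.add_lt_add_right_coe h1 _
    exact absurd (hA (move A g i)) (not_le.mpr (welfare_move_gt f u A i j hij g hg hfinA hlt))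
  have hval : ∃ g ∈ bundle A j, u i g = 1 := by
    by_contra hno
    push_neg at hno
    have hz : util u i ((bundle A j).erase g₀) = 0 :=
      Finset.sum_eq_zero fun x hx =>
        (hbin i x).resolve_right (hno x (Finset.mem_of_mem_erase hx))
    have h1 := hcon g₀ hg₀
    rw [hz] at h1
    exact absurd h1 (not_lt.mpr (util_nonneg u hupos i _))
  obtain ⟨g, hg, hui⟩ := hval
  have huj := hclaim g hg hui
  obtain ⟨en, hen⟩ := util_nat hbin i ((bundle A j).erase g)
  have hse : sn < en := by
    have h1 := hcon g hg
    rw [hsn, hen] at h1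
    exact_mod_cast h1
  have hij_le : util u i (bundle A j) ≤ util u j (bundle A j) := by
    refine Finset.sum_le_sum fun x hx => ?_
    rcases hbin i x with h | h
    · rw [h]; exact hupos j x
    · rw [h, hclaim x hx h]
  have hbreak : util u i (bundle A j) = util u i ((bundle A j).erase g) + u i g := by
    rw [util, util, Finset.sum_erase_eq_sub hg]; ring
  have hst : sn + 2 ≤ tn := by
    have h5 : (en : ℝ) + 1 ≤ (tn : ℝ) := by
      calc (en : ℝ) + 1 = util u i (bundle A j) := by rw [hbreak, hen, hui]
        _ ≤ util u j (bundle A j) := hij_le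
        _ = (tn : ℝ) := htn
    have h6 : en + 1 ≤ tn := by exact_mod_cast h5
    omega
  have hx1b : f ((sn:ℝ)+1) ≠ ⊥ := hfbot _ (by positivity)
  have hx1t : f ((sn:ℝ)+1) ≠ ⊤ := hftop _ (by positivity)
  have htn2 : (2:ℝ) ≤ (tn:ℝ) := by exact_mod_cast (by omega : 2 ≤ tn)
  have hy1b : f ((tn:ℝ)-1) ≠ ⊥ := hfbot _ (by linarith)
  have hy1t : f ((tn:ℝ)-1) ≠ ⊤ := hftop _ (by linarith)
  have hx0b : f ((sn:ℝ)) ≠ ⊥ := by rw [← hsn]; exact (hfinA i).1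
  have hx0t : f ((sn:ℝ)) ≠ ⊤ := by rw [← hsn]; exact (hfinA i).2
  have hy0b : f ((tn:ℝ)) ≠ ⊥ := by rw [← htn]; exact (hfinA j).1
  have hy0t : f ((tn:ℝ)) ≠ ⊤ := by rw [← htn]; exact (hfinA j).2
  have hcx0 : f ((sn:ℝ)) = (((f ((sn:ℝ))).toReal : ℝ) : EReal) := (EReal.coe_toReal hx0t hx0b).symm
  have hcx1 : f ((sn:ℝ)+1) = (((f ((sn:ℝ)+1)).toReal : ℝ) : EReal) :=
    (EReal.coe_toReal hx1t hx1b).symm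
  have hcy0 : f ((tn:ℝ)) = (((f ((tn:ℝ))).toReal : ℝ) : EReal) := (EReal.coe_toReal hy0t hy0b).symm
  have hcy1 : f ((tn:ℝ)-1) = (((f ((tn:ℝ)-1)).toReal : ℝ) : EReal) :=
    (EReal.coe_toReal hy1t hy1b).symm
  have hD : Delta f (tn - 1) 1 < Delta f sn 1 := hanti (show sn < tn - 1 by omega)
  have hDs : Delta f sn 1 = f ((sn:ℝ)+1) - f ((sn:ℝ)) := by
    rw [Delta, show (((sn:ℕ):ℝ)+1) * 1 = (sn:ℝ)+1 by ring,
      show ((sn:ℕ):ℝ) * 1 = (sn:ℝ) by ring]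
  have hDt : Delta f (tn-1) 1 = f ((tn:ℝ)) - f ((tn:ℝ)-1) := by
    have h1t : 1 ≤ tn := by omega
    rw [Delta, show (((tn-1:ℕ):ℝ)+1) * 1 = (tn:ℝ) by
        rw [Nat.cast_sub h1t, Nat.cast_one]; ring,
      show ((tn-1:ℕ):ℝ) * 1 = (tn:ℝ)-1 by rw [Nat.cast_sub h1t, Nat.cast_one]; ring]
  rw [hDs, hDt, hcx0, hcx1, hcy0, hcy1, ← EReal.coe_sub, ← EReal.coe_sub,
    EReal.coe_lt_coe_iff] at hD
  have hlt : f (util u i (bundle A i)) + f (util u j (bundle A j))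
      < f (util u i (bundle A i) + u i g) + f (util u j (bundle A j) - u j g) := by
    rw [hui, huj, hsn, htn, hcx0, hcx1, hcy0, hcy1, ← EReal.coe_add, ← EReal.coe_add,
      EReal.coe_lt_coe_iff]
    linarith
  exact absurd (hA (move A g i)) (not_le.mpr (welfare_move_gt f u A i j hij g hg hfinA hlt))


theorem main_mp (n : ℕ) (hn : 2 ≤ n) (f : ℝ → EReal)
    (hfmono : StrictMonoOn f (Set.Ici (0 : ℝ)))
    (hftop : ∀ x : ℝ, 0 ≤ x → f x ≠ ⊤)
    (hfbot : ∀ x : ℝ, 0 < x → f x ≠ ⊥)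
    (hall : ∀ m : ℕ, ∀ u : Fin n → Fin m → ℝ, (∀ i g, 0 ≤ u i g) →
        Binary u → PositiveAdmitting u →
        ∀ A : Fin m → Fin n, Chosen f u A → EF1 u A) :
    Cond4 f := by
  classical
  by_contra hc
  simp only [Cond4] at hc
  push_neg at hc
  obtain ⟨k, hk⟩ := hc
  -- finiteness at k+1, k+2
  have hq2b : f ((k:ℝ)+1) ≠ ⊥ := hfbot _ (by positivity)
  have hq2t : f ((k:ℝ)+1) ≠ ⊤ := hftop _ (by positivity)
  have hq3b : f ((k:ℝ)+2) ≠ ⊥ := hfbot _ (by positivity)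
  have hq3t : f ((k:ℝ)+2) ≠ ⊤ := hftop _ (by positivity)
  have hc2 : f ((k:ℝ)+1) = (((f ((k:ℝ)+1)).toReal : ℝ) : EReal) := (EReal.coe_toReal hq2t hq2b).symm
  have hc3 : f ((k:ℝ)+2) = (((f ((k:ℝ)+2)).toReal : ℝ) : EReal) := (EReal.coe_toReal hq3t hq3b).symm
  have hD1 : Delta f (k+1) 1 = f ((k:ℝ)+2) - f ((k:ℝ)+1) := by
    rw [Delta, show (((k+1:ℕ):ℝ)+1) * 1 = (k:ℝ)+2 by push_cast; ring,
      show ((k+1:ℕ):ℝ) * 1 = (k:ℝ)+1 by push_cast; ring]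
  have hD0 : Delta f k 1 = f ((k:ℝ)+1) - f ((k:ℝ)) := by
    rw [Delta, show (((k:ℕ):ℝ)+1) * 1 = (k:ℝ)+1 by ring,
      show ((k:ℕ):ℝ) * 1 = (k:ℝ) by ring]
  have hq1b : f ((k:ℝ)) ≠ ⊥ := by
    intro hb
    rw [hD0, hD1, hb, EReal.sub_bot hq2b, hc2, hc3, ← EReal.coe_sub] at hk
    exact EReal.coe_ne_top _ (top_le_iff.mp hk)
  have hq1t : f ((k:ℝ)) ≠ ⊤ := hftop _ (by positivity)
  have hc1 : f ((k:ℝ)) = (((f ((k:ℝ))).toReal : ℝ) : EReal) := (EReal.coe_toReal hq1t hq1b).symm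
  have hkreal : (f ((k:ℝ)+1)).toReal - (f ((k:ℝ))).toReal
      ≤ (f ((k:ℝ)+2)).toReal - (f ((k:ℝ)+1)).toReal := by
    rw [hD0, hD1, hc1, hc2, hc3, ← EReal.coe_sub, ← EReal.coe_sub,
      EReal.coe_le_coe_iff] at hk
    exact hk
  -- argmax split
  have hGmax : ∃ a : ℕ, a ≤ k ∧ ∀ c : ℕ, c ≤ 2*k+2 →
      f ((c:ℝ)) + f (((2*k+2-c:ℕ)):ℝ) ≤ f ((a:ℝ)) + f (((2*k+2-a:ℕ)):ℝ) := by
    obtain ⟨c₀, hc₀mem, hc₀max⟩ := Finset.exists_max_image (Finset.range (2*k+3))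
      (fun c : ℕ => f ((c:ℝ)) + f (((2*k+2-c:ℕ)):ℝ)) ⟨0, Finset.mem_range.mpr (by omega)⟩
    have hc₀le : c₀ ≤ 2*k+2 := by have := Finset.mem_range.mp hc₀mem; omega
    rcases le_or_gt c₀ k with h | h
    · exact ⟨c₀, h, fun c hcle => hc₀max c (Finset.mem_range.mpr (by omega))⟩
    · rcases eq_or_lt_of_le (show k + 1 ≤ c₀ from h) with heq | hlt2
      · -- c₀ = k+1
        refine ⟨k, le_rfl, fun c hcle => (hc₀max c (Finset.mem_range.mpr (by omega))).trans ?_⟩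
        rw [← heq]
        have e1 : (2*k+2-(k+1):ℕ) = k+1 := by omega
        have e2 : (2*k+2-k:ℕ) = k+2 := by omega
        rw [e1, e2, show ((k+1:ℕ):ℝ) = (k:ℝ)+1 by push_cast; ring,
          show ((k+2:ℕ):ℝ) = (k:ℝ)+2 by push_cast; ring]
        rw [hc1, hc2, hc3, ← EReal.coe_add, ← EReal.coe_add, EReal.coe_le_coe_iff]
        linarith
      · -- k+2 ≤ c₀
        refine ⟨2*k+2-c₀, by omega, fun c hcle =>
          (hc₀max c (Finset.mem_range.mpr (by omega))).trans ?_⟩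
        have e : (2*k+2-(2*k+2-c₀):ℕ) = c₀ := by omega
        rw [e]
        exact le_of_eq (add_comm _ _)
  obtain ⟨a, hak, hamax⟩ := hGmax
  obtain ⟨i0, hi0⟩ : ∃ i : Fin n, (i:ℕ) = 0 := ⟨⟨0, by omega⟩, rfl⟩
  obtain ⟨i1, hi1⟩ : ∃ i : Fin n, (i:ℕ) = 1 := ⟨⟨1, by omega⟩, rfl⟩
  have hi01 : i0 ≠ i1 := by
    intro h
    rw [h, hi1] at hi0
    exact one_ne_zero hi0
  have hmono := hfmono.monotoneOn
  -- positive admitting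
  have hadm : PositiveAdmitting (gu n k) := by
    refine ⟨gA n k hn 1, fun i => ?_⟩
    by_cases h0 : (i:ℕ) = 0
    · rw [gA_util0 n k hn 1 (by omega) i h0]; norm_num
    · by_cases h1 : (i:ℕ) = 1
      · rw [gA_util1 n k hn 1 (by omega) i h1]
        exact_mod_cast (by omega : 0 < 2*k+2-1)
      · rw [gA_util2 n k hn 1 (by omega) i (by omega)]; norm_num
  -- chosen
  have hch : Chosen f (gu n k) (gA n k hn a) := by
    intro B
    rw [welfare_split f (gu n k) B i0 i1 hi01,
      welfare_split f (gu n k) (gA n k hn a) i0 i1 hi01,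
      gA_util0 n k hn a (by omega) i0 hi0, gA_util1 n k hn a (by omega) i1 hi1]
    have hrest : (∑ l ∈ (Finset.univ.erase i0).erase i1, f (util (gu n k) l (bundle B l)))
        ≤ ∑ l ∈ (Finset.univ.erase i0).erase i1,
            f (util (gu n k) l (bundle (gA n k hn a) l)) := by
      refine Finset.sum_le_sum fun l hl => ?_
      rw [Finset.mem_erase, Finset.mem_erase] at hl
      have hl2 : 2 ≤ (l:ℕ) := by
        have h1 : (l:ℕ) ≠ 1 := fun h => hl.1 (Fin.ext (by rw [h, hi1]))
        have h0 : (l:ℕ) ≠ 0 := fun h => hl.2.1 (Fin.ext (by rw [h, hi0]))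
        omega
      rw [gA_util2 n k hn a (by omega) l hl2]
      exact hmono (Set.mem_Ici.mpr (util_nonneg _ (gu_nonneg n k) l _))
        (Set.mem_Ici.mpr (by norm_num)) (gu_util_hi_le n k l hl2 _)
    have hmain : f (util (gu n k) i0 (bundle B i0)) + f (util (gu n k) i1 (bundle B i1))
        ≤ f ((a:ℝ)) + f (((2*k+2-a:ℕ)):ℝ) := by
      obtain ⟨c0, hc0⟩ := util_nat (gu_binary n k) i0 (bundle B i0)
      obtain ⟨c1, hc1⟩ := util_nat (gu_binary n k) i1 (bundle B i1)
      have hdisj : Disjoint (bundle B i0) (bundle B i1) := by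
        rw [Finset.disjoint_left]
        intro g hg0 hg1
        simp only [bundle, Finset.mem_filter, Finset.mem_univ, true_and] at hg0 hg1
        exact hi01 (hg0 ▸ hg1)
      have hsum := gu_sum_lo_le n k hn (bundle B i0) (bundle B i1) hdisj i0 i1
        (by omega) (by omega)
      rw [hc0, hc1] at hsum
      have hcc : c0 + c1 ≤ 2*k+2 := by exact_mod_cast hsum
      rw [hc0, hc1]
      calc f ((c0:ℝ)) + f ((c1:ℝ)) ≤ f ((c0:ℝ)) + f (((2*k+2-c0:ℕ)):ℝ) := by
            refine add_le_add_right ?_ _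
            refine hmono (Set.mem_Ici.mpr (by positivity)) (Set.mem_Ici.mpr (by positivity)) ?_
            exact_mod_cast (by omega : c1 ≤ 2*k+2-c0)
        _ ≤ _ := hamax c0 (by omega)
    rw [← add_assoc, ← add_assoc]
    exact add_le_add hmain hrest
  have hEF1 := hall (2*k+n) (gu n k) (gu_nonneg n k) (gu_binary n k) hadm (gA n k hn a) hch
  have hmem : (⟨a, by omega⟩ : Fin (2*k+n)) ∈ bundle (gA n k hn a) i1 := by
    rw [gA_mem1 n k hn a i1 hi1]
    exact ⟨le_rfl, show a < 2*k+2 by omega⟩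
  obtain ⟨g, hg, hle⟩ := hEF1 i0 i1 (Finset.ne_empty_of_mem hmem)
  have hgprop := (gA_mem1 n k hn a i1 hi1 g).mp hg
  have hg1 : gu n k i0 g = 1 := by
    rw [gu_eq_w n k i0 (by omega) g, if_pos hgprop.2]
  have herase : util (gu n k) i0 ((bundle (gA n k hn a) i1).erase g)
      = util (gu n k) i0 (bundle (gA n k hn a) i1) - gu n k i0 g := by
    rw [util, util, Finset.sum_erase_eq_sub hg]
  have hbagval : util (gu n k) i0 (bundle (gA n k hn a) i1) = ((2*k+2-a:ℕ):ℝ) := by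
    rw [util_lo_eq n k i0 i1 (by omega) (by omega), gA_util1 n k hn a (by omega) i1 hi1]
  rw [herase, hbagval, hg1, gA_util0 n k hn a (by omega) i0 hi0] at hle
  have hcast : ((2*k+2-a:ℕ):ℝ) = 2*(k:ℝ)+2-(a:ℝ) := by
    rw [Nat.cast_sub (by omega : a ≤ 2*k+2)]
    push_cast; ring
  rw [hcast] at hle
  have hak' : (a:ℝ) ≤ (k:ℝ) := by exact_mod_cast hak
  linarith

theorem integer_binary (n : ℕ) (hn : 2 ≤ n) (f : ℝ → EReal)
    (hfmono : StrictMonoOn f (Set.Ici (0 : ℝ)))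
    (hftop : ∀ x : ℝ, 0 ≤ x → f x ≠ ⊤) :
    (∀ m : ℕ, ∀ u : Fin n → Fin m → ℝ, (∀ i g, 0 ≤ u i g) →
        Binary u → PositiveAdmitting u →
        ∀ A : Fin m → Fin n, Chosen f u A → EF1 u A)
    ↔ Cond4 f := by
  have hfbot : ∀ x : ℝ, 0 < x → f x ≠ ⊥ := by
    intro x hx hb
    have h := hfmono (Set.mem_Ici.mpr le_rfl) (Set.mem_Ici.mpr hx.le) hx
    rw [hb] at h
    exact not_lt_bot h
  constructor
  · exact fun hall => main_mp n hn f hfmono hftop hfbot hall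
  · exact fun h4 m u h1 h2 h3 A hA => main_mpr n hn f hfmono hftop hfbot h4 m u h1 h2 h3 A hA


end FairDiv
end
end

section
/- Let f : ℝ≥0 → ℝ ∪ {−∞} be a strictly increasing function that satisfies Condition 1. Then f satisfies Condition 1a, i.e., for every k ∈ ℤ>0, the function Δ_{f,k} is constant on ℝ>0. -/
open scoped BigOperators

noncomputable section

namespace FairDiv

/-- Real-valued version of `f` on positive reals. -/
private noncomputable def gg (f : ℝ → EReal) (x : ℝ) : ℝ := (f x).toReal

/-- Real-valued version of `Delta`. -/
private noncomputable def dg (f : ℝ → EReal) (k : ℕ) (x : ℝ) : ℝ :=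
  gg f (((k : ℝ) + 1) * x) - gg f ((k : ℝ) * x)

private lemma f_eq_coe (f : ℝ → EReal) (hfmono : StrictMonoOn f (Set.Ici (0 : ℝ)))
    (hftop : ∀ x : ℝ, 0 ≤ x → f x ≠ ⊤) {x : ℝ} (hx : 0 < x) :
    f x = ((gg f x : ℝ) : EReal) := by
  have hbot : f x ≠ ⊥ := by
    intro h
    have h0 : f 0 < f x := hfmono (Set.mem_Ici.mpr le_rfl) (Set.mem_Ici.mpr hx.le) hx
    rw [h] at h0
    exact not_lt_bot h0
  exact (EReal.coe_toReal (hftop x hx.le) hbot).symm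

private lemma delta_eq (f : ℝ → EReal) (hfmono : StrictMonoOn f (Set.Ici (0 : ℝ)))
    (hftop : ∀ x : ℝ, 0 ≤ x → f x ≠ ⊤) {k : ℕ} (hk : 0 < k) {x : ℝ} (hx : 0 < x) :
    Delta f k x = ((dg f k x : ℝ) : EReal) := by
  have h1 : (0 : ℝ) < ((k : ℝ) + 1) * x := by positivity
  have h2 : (0 : ℝ) < (k : ℝ) * x := by
    have : (0 : ℝ) < (k : ℝ) := by exact_mod_cast hk
    positivity
  rw [Delta, f_eq_coe f hfmono hftop h1, f_eq_coe f hfmono hftop h2, dg, EReal.coe_sub]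

private lemma dg_pos (f : ℝ → EReal) (hfmono : StrictMonoOn f (Set.Ici (0 : ℝ)))
    (hftop : ∀ x : ℝ, 0 ≤ x → f x ≠ ⊤) {k : ℕ} (hk : 0 < k) {x : ℝ} (hx : 0 < x) :
    0 < dg f k x := by
  have hkR : (0 : ℝ) < (k : ℝ) := by exact_mod_cast hk
  have h2 : (0 : ℝ) < (k : ℝ) * x := by positivity
  have h1 : (0 : ℝ) < ((k : ℝ) + 1) * x := by positivity
  have hlt : (k : ℝ) * x < ((k : ℝ) + 1) * x := by nlinarith
  have := hfmono (Set.mem_Ici.mpr h2.le) (Set.mem_Ici.mpr h1.le) hlt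
  rw [f_eq_coe f hfmono hftop h2, f_eq_coe f hfmono hftop h1] at this
  have := EReal.coe_lt_coe_iff.mp this
  rw [dg]; linarith

private lemma dg_step (f : ℝ → EReal) (hfmono : StrictMonoOn f (Set.Ici (0 : ℝ)))
    (hftop : ∀ x : ℝ, 0 ≤ x → f x ≠ ⊤) (hcond : Cond1 f)
    {k : ℕ} (hk : 0 < k) {a b : ℝ} (ha : 0 < a) (hb : 0 < b) :
    dg f (k + 1) a < dg f k b := by
  have h := hcond k a b ha hb
  rw [delta_eq f hfmono hftop (Nat.succ_pos k) ha, delta_eq f hfmono hftop hk hb] at h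
  exact_mod_cast h

private lemma dg_chain (f : ℝ → EReal) (hfmono : StrictMonoOn f (Set.Ici (0 : ℝ)))
    (hftop : ∀ x : ℝ, 0 ≤ x → f x ≠ ⊤) (hcond : Cond1 f)
    {i j : ℕ} (hi : 0 < i) (hij : i < j) {a b : ℝ} (ha : 0 < a) (hb : 0 < b) :
    dg f j a < dg f i b := by
  induction j with
  | zero => omega
  | succ n ih =>
    rcases Nat.lt_succ_iff_lt_or_eq.mp hij with h | h
    · have h1 : dg f (n + 1) a < dg f n a :=
        dg_step f hfmono hftop hcond (by omega) ha ha
      exact h1.trans (ih h)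
    · rw [← h]
      exact dg_step f hfmono hftop hcond hi ha hb

private lemma dg_subdiv (f : ℝ → EReal) (k q : ℕ) (hq : 0 < q) (x : ℝ) :
    dg f k x = ∑ j ∈ Finset.range q, dg f (q * k + j) (x / (q : ℝ)) := by
  have hqR : (q : ℝ) ≠ 0 := by positivity
  have key : ∀ j ∈ Finset.range q, dg f (q * k + j) (x / (q : ℝ))
      = (fun j : ℕ => gg f (((q : ℝ) * (k : ℝ) + (j : ℝ)) * (x / (q : ℝ)))) (j + 1)
        - (fun j : ℕ => gg f (((q : ℝ) * (k : ℝ) + (j : ℝ)) * (x / (q : ℝ)))) j := by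
    intro j _
    simp only [dg]
    congr 2 <;> push_cast <;> ring
  have tele := Finset.sum_range_sub
    (fun j : ℕ => gg f (((q : ℝ) * (k : ℝ) + (j : ℝ)) * (x / (q : ℝ)))) q
  rw [Finset.sum_congr rfl key, tele]
  simp only [dg]
  congr 2
  · field_simp
  · field_simp
    ring

private lemma dg_gap (f : ℝ → EReal) (hfmono : StrictMonoOn f (Set.Ici (0 : ℝ)))
    (hftop : ∀ x : ℝ, 0 ≤ x → f x ≠ ⊤) (hcond : Cond1 f)
    (k r : ℕ) (hk : 0 < k) {x y : ℝ} (hx : 0 < x) (hy : 0 < y) :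
    dg f k y - dg f k x <
      dg f ((r + 2) * k) (y / ((r : ℝ) + 2)) - dg f ((r + 2) * k + (r + 1)) (x / ((r : ℝ) + 2)) := by
  have hq : 0 < r + 2 := by omega
  have hcast : ((r + 2 : ℕ) : ℝ) = (r : ℝ) + 2 := by push_cast; ring
  have hy' : 0 < y / ((r : ℝ) + 2) := by positivity
  have hx' : 0 < x / ((r : ℝ) + 2) := by positivity
  have hsy := dg_subdiv f k (r + 2) hq y
  have hsx := dg_subdiv f k (r + 2) hq x
  rw [hcast] at hsy hsx
  -- split sums
  rw [Finset.sum_range_succ'] at hsy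
  rw [Finset.sum_range_succ] at hsx
  have hsum : ∑ j ∈ Finset.range (r + 1), dg f ((r + 2) * k + (j + 1)) (y / ((r : ℝ) + 2))
      < ∑ j ∈ Finset.range (r + 1), dg f ((r + 2) * k + j) (x / ((r : ℝ) + 2)) := by
    apply Finset.sum_lt_sum_of_nonempty (Finset.nonempty_range_iff.mpr (by omega))
    intro j _
    have hpos : 0 < (r + 2) * k + j := by positivity
    have hidx : (r + 2) * k + (j + 1) = ((r + 2) * k + j) + 1 := by omega
    rw [hidx]
    exact dg_step f hfmono hftop hcond hpos hy' hx'
  have h0 : dg f ((r + 2) * k + 0) (y / ((r : ℝ) + 2)) = dg f ((r + 2) * k) (y / ((r : ℝ) + 2)) := by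
    norm_num
  rw [h0] at hsy
  linarith

private lemma dg_not_lt (f : ℝ → EReal) (hfmono : StrictMonoOn f (Set.Ici (0 : ℝ)))
    (hftop : ∀ x : ℝ, 0 ≤ x → f x ≠ ⊤) (hcond : Cond1 f)
    {k : ℕ} (hk : 0 < k) {x y : ℝ} (hx : 0 < x) (hy : 0 < y) :
    ¬ (dg f k x < dg f k y) := by
  intro hlt
  set ε := dg f k y - dg f k x with hε
  have hεpos : 0 < ε := by simp only [hε]; linarith
  set u : ℕ → ℝ := fun t => dg f (2 ^ (t + 1) * k) (y / ((2 ^ (t + 1) : ℕ) : ℝ)) with hu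
  have hu_pos : ∀ t, 0 < u t := by
    intro t
    have h1 : 0 < 2 ^ (t + 1) * k := by positivity
    have h2 : (0 : ℝ) < ((2 ^ (t + 1) : ℕ) : ℝ) := by positivity
    exact dg_pos f hfmono hftop h1 (by positivity)
  have hstep : ∀ t, u (t + 1) < u t - ε := by
    intro t
    obtain ⟨r, hr⟩ : ∃ r, 2 ^ (t + 1) = r + 2 := by
      have : 2 ≤ 2 ^ (t + 1) := by
        calc 2 = 2 ^ 1 := by norm_num
        _ ≤ 2 ^ (t + 1) := Nat.pow_le_pow_right (by norm_num) (by omega)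
      exact ⟨2 ^ (t + 1) - 2, by omega⟩
    have hrcast : ((2 ^ (t + 1) : ℕ) : ℝ) = (r : ℝ) + 2 := by
      rw [hr]; push_cast; ring
    have hgap := dg_gap f hfmono hftop hcond k r hk hx hy
    have hut : u t = dg f ((r + 2) * k) (y / ((r : ℝ) + 2)) := by
      rw [hu]; simp only [hrcast, hr]; norm_cast
    have hchain : u (t + 1) < dg f ((r + 2) * k + (r + 1)) (x / ((r : ℝ) + 2)) := by
      have hipos : 0 < (r + 2) * k + (r + 1) := by positivity
      have hij : (r + 2) * k + (r + 1) < 2 ^ (t + 2) * k := by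
        have h2t : 2 ^ (t + 2) = 2 * (r + 2) := by
          rw [pow_succ, hr]; ring
        rw [h2t]
        have : r + 1 < (r + 2) * k := by nlinarith
        nlinarith
      have h2 : (0 : ℝ) < ((2 ^ (t + 2) : ℕ) : ℝ) := by positivity
      have := dg_chain f hfmono hftop hcond hipos hij
        (a := y / ((2 ^ (t + 2) : ℕ) : ℝ)) (b := x / ((r : ℝ) + 2)) (by positivity) (by positivity)
      exact this
    rw [hut]
    linarith
  have hdecr : ∀ t, u t ≤ u 0 - t * ε := by
    intro t
    induction t with
    | zero => simp
    | succ n ih =>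
      have := hstep n
      push_cast
      have : u (n + 1) < u 0 - n * ε - ε := by linarith
      linarith
  obtain ⟨T, hT⟩ := exists_nat_gt (u 0 / ε)
  have hTε : u 0 < T * ε := by
    rw [div_lt_iff₀ hεpos] at hT
    linarith
  have := hdecr T
  have := hu_pos T
  linarith

theorem cond1_implies_cond1a (f : ℝ → EReal)
    (hfmono : StrictMonoOn f (Set.Ici (0 : ℝ)))
    (hftop : ∀ x : ℝ, 0 ≤ x → f x ≠ ⊤)
    (hcond : Cond1 f) :
    Cond1a f := by
  intro k hk x y hx hy
  rw [delta_eq f hfmono hftop hk hx, delta_eq f hfmono hftop hk hy]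
  norm_cast
  exact le_antisymm (not_lt.mp (dg_not_lt f hfmono hftop hcond hk hy hx))
    (not_lt.mp (dg_not_lt f hfmono hftop hcond hk hx hy))

end FairDiv
end
end

section
/- Let f : ℝ≥0 → ℝ ∪ {−∞} be a strictly increasing function that is continuous on ℝ>0 and satisfies Condition 1a. Then there exist constants α ∈ ℝ>0 and β ∈ ℝ such that f(x) = α·log x + β for all x ∈ ℝ≥0 (in particular f(0) = −∞). -/
open scoped BigOperators

noncomputable section

namespace FairDiv

private lemma lin_of_add (ψ : ℝ → ℝ) (hadd : ∀ a b, ψ (a + b) = ψ a + ψ b)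
    (hcont : Continuous ψ) (r : ℝ) : ψ r = r * ψ 1 := by
  have := map_real_smul (AddMonoidHom.mk' ψ hadd) hcont r 1
  simpa [smul_eq_mul] using this

private lemma dense_logratio :
    Dense {r : ℝ | ∃ n m : ℕ, 1 ≤ n ∧ 1 ≤ m ∧ r = Real.log n - Real.log m} := by
  rw [Metric.dense_iff]
  intro x ε hε
  obtain ⟨q, hq1, hq2⟩ := exists_rat_btwn (Real.exp_lt_exp.mpr (by linarith : x - ε < x + ε))
  have hq0 : (0:ℝ) < (q:ℝ) := lt_trans (Real.exp_pos _) hq1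
  have hnum : 0 < q.num := Rat.num_pos.mpr (by exact_mod_cast hq0)
  set n : ℕ := q.num.toNat with hn
  set m : ℕ := q.den with hm
  have hqnm : (q:ℝ) = (n:ℝ) / (m:ℝ) := by
    rw [Rat.cast_def]
    congr 1
    · rw [hn]; exact_mod_cast (Int.toNat_of_nonneg hnum.le).symm
  have hn1 : 1 ≤ n := by omega
  have hm1 : 1 ≤ m := q.pos
  have hlog : Real.log q = Real.log n - Real.log m := by
    rw [hqnm, Real.log_div (by positivity) (by positivity)]
  refine ⟨Real.log q, Metric.mem_ball.mpr ?_, ⟨n, m, hn1, hm1, hlog⟩⟩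
  have h1 : x - ε < Real.log q := by
    rw [show x - ε = Real.log (Real.exp (x - ε)) from (Real.log_exp _).symm]
    exact Real.log_lt_log (Real.exp_pos _) hq1
  have h2 : Real.log q < x + ε := by
    rw [show x + ε = Real.log (Real.exp (x + ε)) from (Real.log_exp _).symm]
    exact Real.log_lt_log hq0 hq2
  rw [Real.dist_eq, abs_lt]; constructor <;> linarith

private lemma real_version_log (F : ℝ → ℝ)
    (hmono : StrictMonoOn F (Set.Ioi (0:ℝ)))
    (hcont : ContinuousOn F (Set.Ioi (0:ℝ)))
    (hC : ∀ n : ℕ, 1 ≤ n → ∀ x : ℝ, 0 < x → F ((n:ℝ) * x) = F x + (F n - F 1)) :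
    ∃ α β : ℝ, 0 < α ∧ ∀ x : ℝ, 0 < x → F x = α * Real.log x + β := by
  set G : ℝ → ℝ := fun t => F (Real.exp t) with hG
  have hGcont : Continuous G :=
    hcont.comp_continuous Real.continuous_exp (fun t => Real.exp_pos t)
  have hGmono : StrictMono G := fun s t hst =>
    hmono (Real.exp_pos s) (Real.exp_pos t) (Real.exp_lt_exp.mpr hst)
  have key : ∀ n : ℕ, 1 ≤ n → ∀ t : ℝ, G (t + Real.log n) = G t + (F n - F 1) := by
    intro n hn t
    have hn0 : (0:ℝ) < n := by exact_mod_cast hn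
    have : Real.exp (t + Real.log n) = (n:ℝ) * Real.exp t := by
      rw [Real.exp_add, Real.exp_log hn0]; ring
    simp only [hG, this]
    exact hC n hn _ (Real.exp_pos t)
  have keyS : ∀ n m : ℕ, 1 ≤ n → 1 ≤ m → ∀ t : ℝ,
      G (t + (Real.log n - Real.log m)) = G t + ((F n - F 1) - (F m - F 1)) := by
    intro n m hn hm t
    have h1 := key n hn (t - Real.log m)
    have h2 := key m hm (t - Real.log m)
    have e2 : t - Real.log m + Real.log m = t := by ring
    rw [e2] at h2
    have e1 : t - Real.log m + Real.log n = t + (Real.log n - Real.log m) := by ring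
    rw [e1] at h1
    linarith
  set ψ : ℝ → ℝ := fun r => G r - G 0 with hψ
  have keyAll : ∀ t r : ℝ, G (t + r) = G t + ψ r := by
    intro t
    have heq : Set.EqOn (fun r => G (t + r)) (fun r => G t + ψ r)
        {r : ℝ | ∃ n m : ℕ, 1 ≤ n ∧ 1 ≤ m ∧ r = Real.log n - Real.log m} := by
      rintro r ⟨n, m, hn, hm, rfl⟩
      have h1 := keyS n m hn hm t
      have h2 := keyS n m hn hm 0
      simp only [hψ, zero_add] at h2 ⊢
      rw [h1, h2]; ring
    have := Continuous.ext_on dense_logratio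
      (hGcont.comp (continuous_const.add continuous_id))
      (continuous_const.add ((hGcont.sub continuous_const)))
      heq
    exact fun r => congrFun this r
  have hadd : ∀ a b : ℝ, ψ (a + b) = ψ a + ψ b := by
    intro a b
    have h1 := keyAll a b
    have h2 := keyAll 0 a
    simp only [hψ, zero_add] at *
    rw [add_comm a b] at *
    linarith [keyAll b a]
  have hψcont : Continuous ψ := hGcont.sub continuous_const
  have hlin : ∀ r, ψ r = r * ψ 1 := lin_of_add ψ hadd hψcont
  refine ⟨ψ 1, G 0, ?_, ?_⟩
  · have : G 0 < G 1 := hGmono one_pos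
    simp only [hψ]; linarith
  · intro x hx
    have : F x = G (Real.log x) := by simp only [hG, Real.exp_log hx]
    rw [this, show Real.log x = 0 + Real.log x by ring, keyAll 0 (Real.log x),
      hlin (Real.log x)]
    ring

theorem cond1a_implies_log (f : ℝ → EReal)
    (hfmono : StrictMonoOn f (Set.Ici (0 : ℝ)))
    (hftop : ∀ x : ℝ, 0 ≤ x → f x ≠ ⊤)
    (hfcont : ContinuousOn f (Set.Ioi (0 : ℝ)))
    (hcond : Cond1a f) :
    (∃ α β : ℝ, 0 < α ∧ f 0 = ⊥ ∧
        ∀ x : ℝ, 0 < x → f x = ((α * Real.log x + β : ℝ) : EReal)) := by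
  have hne_bot : ∀ x : ℝ, 0 < x → f x ≠ ⊥ := by
    intro x hx hbx
    have h := hfmono (Set.mem_Ici.mpr (by linarith : (0:ℝ) ≤ x / 2))
      (Set.mem_Ici.mpr hx.le) (by linarith : x / 2 < x)
    rw [hbx] at h
    exact not_lt_bot h
  set F : ℝ → ℝ := fun x => (f x).toReal with hF
  have hreal : ∀ x : ℝ, 0 < x → f x = ((F x : ℝ) : EReal) := by
    intro x hx
    exact (EReal.coe_toReal (hftop x hx.le) (hne_bot x hx)).symm
  have hFmono : StrictMonoOn F (Set.Ioi (0:ℝ)) := by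
    intro x hx y hy hxy
    have := hfmono (Set.mem_Ici.mpr (le_of_lt hx)) (Set.mem_Ici.mpr (le_of_lt hy)) hxy
    rw [hreal x hx, hreal y hy] at this
    exact EReal.coe_lt_coe_iff.mp this
  have hFcont : ContinuousOn F (Set.Ioi (0:ℝ)) := by
    rw [EReal.isEmbedding_coe.isInducing.continuousOn_iff]
    exact hfcont.congr fun x hx => (hreal x hx).symm
  have hdelta : ∀ k : ℕ, 0 < k → ∀ x y : ℝ, 0 < x → 0 < y →
      F ((k+1) * x) - F (k * x) = F ((k+1) * y) - F (k * y) := by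
    intro k hk x y hx hy
    have h := hcond k hk x y hx hy
    have hk0 : (0:ℝ) < (k:ℝ) := by exact_mod_cast hk
    unfold Delta at h
    rw [hreal _ (by positivity), hreal _ (by positivity),
        hreal _ (by positivity), hreal _ (by positivity)] at h
    rw [← EReal.coe_sub, ← EReal.coe_sub] at h
    have := EReal.coe_eq_coe_iff.mp h
    push_cast at this ⊢
    linarith
  have hA : ∀ n : ℕ, 1 ≤ n → ∀ x y : ℝ, 0 < x → 0 < y →
      F ((n:ℝ) * x) - F x = F ((n:ℝ) * y) - F y := by
    intro n hn
    induction n, hn using Nat.le_induction with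
    | base => intro x y hx hy; simp
    | succ n hn ih =>
      intro x y hx hy
      have h1 := hdelta n hn x y hx hy
      have h2 := ih x y hx hy
      push_cast at h1 ⊢
      linarith
  have hC : ∀ n : ℕ, 1 ≤ n → ∀ x : ℝ, 0 < x → F ((n:ℝ) * x) = F x + (F n - F 1) := by
    intro n hn x hx
    have := hA n hn x 1 hx one_pos
    rw [mul_one] at this
    linarith
  obtain ⟨α, β, hα, hFx⟩ := real_version_log F hFmono hFcont hC
  refine ⟨α, β, hα, ?_, fun x hx => by rw [hreal x hx, hFx x hx]⟩
  by_contra hb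
  set c : ℝ := (f 0).toReal with hc
  have hf0 : f 0 = (c : EReal) := (EReal.coe_toReal (hftop 0 le_rfl) hb).symm
  set x₀ : ℝ := Real.exp ((c - β) / α - 1) with hx₀
  have hx₀pos : 0 < x₀ := Real.exp_pos _
  have hlt := hfmono (Set.mem_Ici.mpr le_rfl) (Set.mem_Ici.mpr hx₀pos.le) hx₀pos
  rw [hf0, hreal x₀ hx₀pos, hFx x₀ hx₀pos] at hlt
  have hlt' : c < α * Real.log x₀ + β := EReal.coe_lt_coe_iff.mp hlt
  rw [hx₀, Real.log_exp] at hlt'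
  have : α * ((c - β) / α - 1) = (c - β) - α := by
    rw [mul_sub, mul_one, mul_div_cancel₀ _ hα.ne']
  rw [this] at hlt'
  linarith


end FairDiv
end
end

section
/- Let f : ℝ≥0 → ℝ ∪ {−∞} be a strictly increasing function. Then the following are equivalent: (a) f satisfies Condition 3; (b) f satisfies Condition 3a; (c) f satisfies Condition 3b. -/
open scoped BigOperators

noncomputable section

namespace FairDiv

/-! ### Auxiliary machinery for `cond3_eqv` -/

lemma aux_tele_lt (u v : ℕ → ℝ) (n : ℕ) (hn : 0 < n)
    (h : ∀ i < n, u (i+1) - u i < v (i+1) - v i) : u n - u 0 < v n - v 0 := by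
  rw [← Finset.sum_range_sub u n, ← Finset.sum_range_sub v n]
  exact Finset.sum_lt_sum_of_nonempty (Finset.nonempty_range_iff.2 hn.ne')
    (fun i hi => h i (Finset.mem_range.1 hi))

lemma aux_key (gn : ℕ → ℝ)
    (hub : ∀ j c : ℕ, 1 ≤ j → 0 < c → gn (j+2) - gn (j+1) < gn ((j+1)*c) - gn (j*c))
    (hlb : ∀ j c : ℕ, 1 ≤ j → 0 < c → gn ((j+2)*c) - gn ((j+1)*c) < gn (j+1) - gn j)
    (hmono : ∀ m n : ℕ, 1 ≤ m → m ≤ n → gn m ≤ gn n)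
    (k a b : ℕ) (hk : 1 ≤ k) (ha : 2 ≤ a) (hb : 2 ≤ b) :
    gn ((k+2)*a) - gn ((k+1)*a) < gn ((k+1)*b) - gn (k*b) := by
  have hka : 4 ≤ (k+1)*a :=
    le_trans (show (4:ℕ) ≤ 2*2 by norm_num) (Nat.mul_le_mul (by omega) ha)
  obtain ⟨C, hC⟩ : ∃ C, (k+1)*a = C + 1 := ⟨(k+1)*a - 1, by omega⟩
  have hC3 : 3 ≤ C := by omega
  have hkb : 1 ≤ k*b := Nat.one_le_iff_ne_zero.2 (Nat.mul_ne_zero (by omega) (by omega))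
  have upper : gn (C+a+1) - gn (C+0+1) < gn ((C+a)*(k*b+1)) - gn ((C+0)*(k*b+1)) :=
    aux_tele_lt (fun i => gn (C+i+1)) (fun i => gn ((C+i)*(k*b+1))) a (by omega)
      (fun i _ => hub (C+i) (k*b+1) (by omega) (by omega))
  have lower : gn ((k*b+b+1)*C) - gn ((k*b+0+1)*C) < gn (k*b+b) - gn (k*b+0) :=
    aux_tele_lt (fun i => gn ((k*b+i+1)*C)) (fun i => gn (k*b+i)) b (by omega)
      (fun i _ => hlb (k*b+i) C (by omega) (by omega))
  have hCb : (k+1)*a*b = (C+1)*b := by rw [hC]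
  have hab : a + b ≤ a*b := Nat.add_le_mul ha hb
  have hmid : (C+a)*(k*b+1) ≤ (k*b+b+1)*C := by nlinarith [hCb, hab]
  have heq : (C+0)*(k*b+1) = (k*b+0+1)*C := by ring
  have M : gn ((C+a)*(k*b+1)) - gn ((C+0)*(k*b+1))
      ≤ gn ((k*b+b+1)*C) - gn ((k*b+0+1)*C) := by
    rw [heq]
    have h1 : gn ((C+a)*(k*b+1)) ≤ gn ((k*b+b+1)*C) :=
      hmono _ _ (Nat.one_le_iff_ne_zero.2 (Nat.mul_ne_zero (by omega) (by omega))) hmid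
    linarith
  have e2 : (k+2)*a = C+a+1 := by
    have : (k+2)*a = (k+1)*a + a := by ring
    omega
  have e3 : (k+1)*b = k*b + b := by ring
  rw [e2, hC, e3]
  calc gn (C+a+1) - gn (C+1) = gn (C+a+1) - gn (C+0+1) := by norm_num
    _ < gn (k*b+b) - gn (k*b+0) := (upper.trans_le M).trans lower
    _ = gn (k*b+b) - gn (k*b) := by norm_num

lemma aux_ne_bot (f : ℝ → EReal) (hfmono : StrictMonoOn f (Set.Ici (0 : ℝ)))
    {x : ℝ} (hx : 0 < x) : f x ≠ ⊥ := by
  intro h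
  have := hfmono (Set.mem_Ici.2 le_rfl) (Set.mem_Ici.2 hx.le) hx
  rw [h] at this
  exact not_lt_bot this

/-- The real values of `f` at positive naturals. -/
def gnat (f : ℝ → EReal) (n : ℕ) : ℝ := (f (n : ℝ)).toReal

lemma aux_fd_eq (f : ℝ → EReal) (hfmono : StrictMonoOn f (Set.Ici (0 : ℝ)))
    (hftop : ∀ x : ℝ, 0 ≤ x → f x ≠ ⊤) {x : ℝ} (hx : 0 < x) :
    f x = (((f x).toReal : ℝ) : EReal) :=
  (EReal.coe_toReal (hftop x hx.le) (aux_ne_bot f hfmono hx)).symm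

lemma aux_delta_eq (f : ℝ → EReal) (hfmono : StrictMonoOn f (Set.Ici (0 : ℝ)))
    (hftop : ∀ x : ℝ, 0 ≤ x → f x ≠ ⊤) (k a : ℕ) (hk : 0 < k) (ha : 0 < a) :
    Delta f k (a : ℝ) = ((gnat f ((k+1)*a) - gnat f (k*a) : ℝ) : EReal) := by
  have h1 : ((k : ℝ) + 1) * (a : ℝ) = (((k+1)*a : ℕ) : ℝ) := by push_cast; ring
  have h2 : (k : ℝ) * (a : ℝ) = ((k*a : ℕ) : ℝ) := by push_cast; ring
  have hp1 : (0:ℝ) < (((k+1)*a : ℕ) : ℝ) := by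
    exact_mod_cast Nat.mul_pos (Nat.succ_pos k) ha
  have hp2 : (0:ℝ) < ((k*a : ℕ) : ℝ) := by exact_mod_cast Nat.mul_pos hk ha
  rw [Delta, h1, h2, aux_fd_eq f hfmono hftop hp1, aux_fd_eq f hfmono hftop hp2]
  rfl

theorem cond3_eqv (f : ℝ → EReal)
    (hfmono : StrictMonoOn f (Set.Ici (0 : ℝ)))
    (hftop : ∀ x : ℝ, 0 ≤ x → f x ≠ ⊤) :
    (Cond3 f ↔ Cond3a f) ∧ (Cond3 f ↔ Cond3b f) := by
  have A : Cond3 f → Cond3a f := by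
    intro h3 k l hlk a b ha hb
    suffices H : ∀ m, l < m → ∀ a' : ℕ, 0 < a' → Delta f m (a' : ℝ) < Delta f l (b : ℝ) from
      H k hlk a ha
    intro m hm
    induction m, hm using Nat.le_induction with
    | base => intro a' ha'; exact h3 l a' b ha' hb
    | succ m hm IH => intro a' ha'; exact (h3 m a' 1 ha' one_pos).trans (IH 1 one_pos)
  have B : Cond3a f → Cond3 f := fun h3a k a b ha hb =>
    h3a (k+1) k (Nat.lt_succ_self k) a b ha hb
  have C3 : Cond3 f → Cond3b f := by
    intro h3 k a ha
    constructor
    · simpa using h3 k a 1 ha one_pos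
    · simpa using h3 (k+1) 1 a one_pos ha
  have D : Cond3b f → Cond3 f := by
    intro h3b
    have hmono' : ∀ m n : ℕ, 1 ≤ m → m ≤ n → gnat f m ≤ gnat f n := by
      intro m n hm hmn
      rcases eq_or_lt_of_le hmn with rfl | h
      · exact le_rfl
      · have hm' : (0:ℝ) < (m:ℝ) := by exact_mod_cast hm
        have hn' : (0:ℝ) < (n:ℝ) := by exact_mod_cast hm.trans hmn
        have hf : f (m:ℝ) < f (n:ℝ) :=
          hfmono (Set.mem_Ici.2 hm'.le) (Set.mem_Ici.2 hn'.le) (by exact_mod_cast h)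
        rw [aux_fd_eq f hfmono hftop hm', aux_fd_eq f hfmono hftop hn'] at hf
        exact (EReal.coe_lt_coe_iff.1 hf).le
    have hub : ∀ j c : ℕ, 1 ≤ j → 0 < c →
        gnat f (j+2) - gnat f (j+1) < gnat f ((j+1)*c) - gnat f (j*c) := by
      intro j c hj hc
      have h := (h3b (j-1) c hc).2
      rw [show j-1+2 = j+1 from by omega, show j-1+1 = j from by omega] at h
      have d1 := aux_delta_eq f hfmono hftop (j+1) 1 (by omega) one_pos
      rw [Nat.cast_one] at d1
      have d2 := aux_delta_eq f hfmono hftop j c (by omega) hc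
      rw [d1, d2] at h
      have h' := EReal.coe_lt_coe_iff.1 h
      simpa [mul_one] using h'
    have hlb : ∀ j c : ℕ, 1 ≤ j → 0 < c →
        gnat f ((j+2)*c) - gnat f ((j+1)*c) < gnat f (j+1) - gnat f j := by
      intro j c hj hc
      have h := (h3b j c hc).1
      have d1 := aux_delta_eq f hfmono hftop j 1 (by omega) one_pos
      rw [Nat.cast_one] at d1
      have d2 := aux_delta_eq f hfmono hftop (j+1) c (by omega) hc
      rw [d1, d2] at h
      have h' := EReal.coe_lt_coe_iff.1 h
      simpa [mul_one] using h'
    intro k a b ha hb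
    rcases Nat.eq_zero_or_pos k with rfl | hk
    · have h1 : Delta f (0+1) (a:ℝ) < Delta f 0 1 := (h3b 0 a ha).1
      have h2 : Delta f 0 1 ≤ Delta f 0 (b:ℝ) := by
        have hb1 : (1:ℝ) ≤ (b:ℝ) := by exact_mod_cast hb
        have hfb : f 1 ≤ f (b:ℝ) :=
          hfmono.monotoneOn (Set.mem_Ici.2 (by norm_num))
            (Set.mem_Ici.2 (by linarith)) hb1
        simp only [Delta, Nat.cast_zero, zero_add, one_mul, zero_mul, mul_one]
        exact EReal.sub_le_sub hfb le_rfl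
      exact h1.trans_le h2
    rcases Nat.lt_or_ge a 2 with ha2 | ha2
    · have ha1 : a = 1 := by omega
      subst ha1
      obtain ⟨k', rfl⟩ : ∃ k', k = k'+1 := ⟨k-1, by omega⟩
      simpa using (h3b k' b hb).2
    rcases Nat.lt_or_ge b 2 with hb2 | hb2
    · have hb1 : b = 1 := by omega
      subst hb1
      simpa using (h3b k a ha).1
    have main := aux_key (gnat f) hub hlb hmono' k a b hk ha2 hb2
    have d1 := aux_delta_eq f hfmono hftop (k+1) a (by omega) ha
    have d2 := aux_delta_eq f hfmono hftop k b hk hb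
    rw [d1, d2]
    exact_mod_cast main
  exact ⟨⟨A, B⟩, ⟨C3, D⟩⟩

end FairDiv
end
end

section
/- For c ∈ ℝ≥0, the modified logarithmic function λ_c satisfies Condition 3b if and only if 0 ≤ c ≤ 1. -/
open scoped BigOperators

noncomputable section

namespace FairDiv

lemma lam_of_pos (c x : ℝ) (h : 0 < x + c) : lam c x = ((Real.log (x + c) : ℝ) : EReal) := by
  simp [lam, h.ne']

lemma delta_lam_eq (c : ℝ) (k : ℕ) (x : ℝ) (hx : 0 < x) (h2 : 0 < (k : ℝ) * x + c) :
    Delta (lam c) k x = ((Real.log (((k : ℝ) + 1) * x + c) - Real.log ((k : ℝ) * x + c) : ℝ) : EReal) := by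
  have h1 : 0 < ((k : ℝ) + 1) * x + c := by nlinarith
  rw [Delta, lam_of_pos c _ h1, lam_of_pos c _ h2, ← EReal.coe_sub]

lemma log_sub_lt (A B C D : ℝ) (hA : 0 < A) (hB : 0 < B) (hC : 0 < C)
    (h : B * C < D * A) : Real.log B - Real.log A < Real.log D - Real.log C := by
  have hD : 0 < D := by nlinarith
  rw [sub_lt_sub_iff, ← Real.log_mul hB.ne' hC.ne', ← Real.log_mul hD.ne' hA.ne']
  exact Real.log_lt_log (by positivity) h

lemma log_sub_le (A B C D : ℝ) (hA : 0 < A) (hC : 0 < C) (hD : 0 < D)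
    (h : D * A ≤ B * C) : Real.log D - Real.log C ≤ Real.log B - Real.log A := by
  have hB : 0 < B := by nlinarith
  rw [sub_le_sub_iff, ← Real.log_mul hB.ne' hC.ne', ← Real.log_mul hD.ne' hA.ne']
  exact Real.log_le_log (by positivity) h

theorem lam_cond3b (c : ℝ) (hc : 0 ≤ c) :
    Cond3b (lam c) ↔ (0 ≤ c ∧ c ≤ 1) := by
  constructor
  · intro h
    refine ⟨hc, ?_⟩
    by_contra hc1
    push_neg at hc1
    have hc0 : 0 < c := lt_trans one_pos hc1
    obtain ⟨a, ha⟩ := exists_nat_gt (c / (c - 1))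
    have hfrac : 0 < c / (c - 1) := div_pos hc0 (by linarith)
    have ha0 : 0 < a := by
      rcases Nat.eq_zero_or_pos a with h0 | h0
      · rw [h0] at ha; simp at ha; linarith
      · exact h0
    have haR : (0:ℝ) < (a : ℝ) := by exact_mod_cast ha0
    have hac : c < (a : ℝ) * (c - 1) := by
      have := (div_lt_iff₀ (by linarith : (0:ℝ) < c - 1)).mp ha
      linarith
    have hkey := (h 0 a ha0).1
    rw [delta_lam_eq c 1 (a:ℝ) haR (by push_cast; nlinarith),
        delta_lam_eq c 0 1 one_pos (by push_cast; nlinarith)] at hkey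
    rw [EReal.coe_lt_coe_iff] at hkey
    have hle := log_sub_le (((1:ℕ):ℝ) * (a:ℝ) + c) ((((1:ℕ):ℝ) + 1) * (a:ℝ) + c)
      (((0:ℕ):ℝ) * 1 + c) ((((0:ℕ):ℝ) + 1) * 1 + c)
      (by push_cast; nlinarith) (by push_cast; nlinarith) (by push_cast; nlinarith)
      (by push_cast; nlinarith)
    linarith
  · rintro ⟨_, hc1⟩
    intro k a ha
    have haR : (0:ℝ) < (a : ℝ) := by exact_mod_cast ha
    have ha1 : (1:ℝ) ≤ (a : ℝ) := by exact_mod_cast ha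
    have hk0 : (0:ℝ) ≤ (k : ℝ) := Nat.cast_nonneg k
    have hd1 := delta_lam_eq c (k+1) (a:ℝ) haR (by push_cast; nlinarith)
    have hd2 := delta_lam_eq c (k+2) 1 one_pos (by push_cast; nlinarith)
    constructor
    · rw [hd1]
      rcases eq_or_lt_of_le (by linarith : (0:ℝ) ≤ (k:ℝ) + c) with hkc | hkc
      · have hbot : lam c ((k:ℝ) * 1) = ⊥ := by
          simp only [mul_one, lam, ← hkc]
          simp
        have htop : Delta (lam c) k 1 = ⊤ := by
          rw [Delta, hbot, lam_of_pos c _ (by rw [← hkc] at *; nlinarith)]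
          rfl
        rw [htop]
        exact EReal.coe_lt_top _
      · rw [delta_lam_eq c k 1 one_pos (by rw [mul_one]; exact hkc), EReal.coe_lt_coe_iff]
        push_cast
        apply log_sub_lt <;>
          nlinarith [mul_nonneg (sub_nonneg.mpr hc1) (sub_nonneg.mpr ha1), mul_nonneg hk0 haR.le,
            mul_nonneg hk0 hc]
    · rw [hd1, hd2, EReal.coe_lt_coe_iff]
      push_cast
      apply log_sub_lt <;>
        nlinarith [mul_nonneg hc (sub_nonneg.mpr ha1), mul_nonneg hk0 haR.le, mul_nonneg hk0 hc]

end FairDiv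
end
end
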